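/- Let ε ∈ {1, −1}. The set of r₀ ∈ H with P r₀ = 0 for which the sequence of partial sums K_l := ∑_{j=0}^{l} (ε · P∘R)^j (P(R r₀)) converges in H as l → ∞ is dense in the kernel of P. (For ε = −1 this is the solvability-by-Neumann-series density statement for the generalized Marchenko equation K + π*RK = −π*R r₀; for ε = +1 it is the analogous statement for the velocity-field equation K − π*RK = −π*R r₀.) -/

import Mathlib

open Filter ContinuousLinearMap

lemma geom_partial {H : Type*} [NormedAddCommGroup H] [InnerProductSpace ℂ H]
    (A : H →L[ℂ] H) (y : H) (l : ℕ) :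
    ∑ j ∈ Finset.range (l + 1), (A ^ j) ((1 - A) y) = y - (A ^ (l + 1)) y := by
  have : ∀ j, (A ^ j) ((1 - A) y) = (A ^ j) y - (A ^ (j+1)) y := by
    intro j
    rw [pow_succ]
    simp [sub_apply, one_apply_eq_self, map_sub, mul_apply_eq_comp]
  simp_rw [this]
  rw [Finset.sum_range_sub' (fun j => (A ^ j) y) (l+1)]
  simp

lemma sa_contraction_pow_diff {H : Type*} [NormedAddCommGroup H] [InnerProductSpace ℂ H]
    [CompleteSpace H] (A : H →L[ℂ] H) (hA : IsSelfAdjoint A)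
    (hn : ∀ v, ‖A v‖ ≤ ‖v‖) (z : H) :
    Tendsto (fun l : ℕ => (A ^ l) z - (A ^ (l + 2)) z) atTop (nhds 0) := by
  set a : ℕ → ℝ := fun l => ‖(A ^ l) z‖ with ha
  have hstep : ∀ l, (A ^ (l+1)) z = A ((A ^ l) z) := by
    intro l; rw [pow_succ']; simp [mul_apply_eq_comp]
  have hanti : Antitone a := antitone_nat_of_succ_le (by
    intro l; simp only [ha, hstep]; exact hn _)
  have hbdd : BddBelow (Set.range a) := ⟨0, by rintro x ⟨l, rfl⟩; exact norm_nonneg _⟩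
  obtain ⟨c, hc⟩ : ∃ c, Tendsto a atTop (nhds c) :=
    ⟨_, tendsto_atTop_ciInf hanti hbdd⟩
  have hsq : Tendsto (fun l => ‖(A ^ l) z - (A ^ (l + 2)) z‖ ^ 2) atTop (nhds 0) := by
    have hinner : ∀ l : ℕ,
        RCLike.re (inner ℂ ((A ^ l) z) ((A ^ (l+2)) z) : ℂ) = a (l+1) ^ 2 := by
      intro l
      have : (inner ℂ ((A ^ l) z) ((A ^ (l+2)) z) : ℂ)
          = inner ℂ ((A ^ (l+1)) z) ((A ^ (l+1)) z) := by
        rw [hstep (l+1), hstep l]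
        exact (hA.isSymmetric ((A ^ l) z) (A ((A ^ l) z))).symm
      rw [this, inner_self_eq_norm_sq]
    have heq : ∀ l : ℕ, ‖(A ^ l) z - (A ^ (l + 2)) z‖ ^ 2
        = a l ^ 2 - 2 * a (l+1) ^ 2 + a (l+2) ^ 2 := by
      intro l
      rw [norm_sub_sq (𝕜 := ℂ), hinner l]
    simp_rw [heq]
    have hc2 : Tendsto (fun l => a l ^ 2) atTop (nhds (c ^ 2)) := (hc.pow 2)
    have h1 : Tendsto (fun l => a (l+1) ^ 2) atTop (nhds (c ^ 2)) :=
      hc2.comp (tendsto_add_atTop_nat 1)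
    have h2 : Tendsto (fun l => a (l+2) ^ 2) atTop (nhds (c ^ 2)) :=
      hc2.comp (tendsto_add_atTop_nat 2)
    have h3 := (hc2.sub (h1.const_mul 2)).add h2
    have h4 : c ^ 2 - 2 * c ^ 2 + c ^ 2 = 0 := by ring
    rw [h4] at h3
    exact h3
  rw [tendsto_zero_iff_norm_tendsto_zero]
  have h5 : Tendsto (fun l => Real.sqrt (‖(A ^ l) z - (A ^ (l + 2)) z‖ ^ 2)) atTop
      (nhds (Real.sqrt 0)) := (Real.continuous_sqrt.continuousAt.tendsto).comp hsq
  have h6 : ∀ l : ℕ, Real.sqrt (‖(A ^ l) z - (A ^ (l + 2)) z‖ ^ 2)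
      = ‖(A ^ l) z - (A ^ (l + 2)) z‖ := fun l => Real.sqrt_sq (norm_nonneg _)
  simp_rw [h6, Real.sqrt_zero] at h5
  exact h5

set_option maxHeartbeats 1000000 in
/-- Let `ε ∈ {1, −1}`. The set of `r₀ ∈ H` with `P r₀ = 0` for which
the partial sums `K_l := ∑_{j=0}^{l} (ε • P∘R)^j (P (R r₀))` converge in `H` as `l → ∞`
is dense in the kernel of `P`. -/
theorem stmt18 {H : Type*} [NormedAddCommGroup H] [InnerProductSpace ℂ H] [CompleteSpace H]
    (R P : H →L[ℂ] H)
    (hR : IsSelfAdjoint R) (hR2 : R ∘L R = 1)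
    (hP : IsSelfAdjoint P) (hP2 : P ∘L P = P)
    (ε : ℂ) (hε : ε = 1 ∨ ε = -1) :
    ∀ h : H, P h = 0 →
      h ∈ closure {r₀ : H | P r₀ = 0 ∧
        ∃ K : H,
          Tendsto
            (fun l : ℕ => ∑ j ∈ Finset.range (l + 1), ((ε • (P ∘L R)) ^ j) (P (R r₀)))
            atTop (nhds K)} := by
  intro h hh
  have hR2' : R * R = 1 := hR2
  have hP2' : P * P = P := hP2
  have hεR : star ε = ε := by rcases hε with rfl | rfl <;> simp
  have hε2 : ε * ε = 1 := by rcases hε with rfl | rfl <;> norm_num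
  set C : H →L[ℂ] H := ε • R with hCdef
  have hCsa : IsSelfAdjoint C := by
    rw [IsSelfAdjoint, hCdef, star_smul, hR.star_eq, hεR]
  have hC2 : C * C = 1 := by
    rw [hCdef, smul_mul_assoc, mul_smul_comm, smul_smul, hε2, hR2', one_smul]
  set Q : H →L[ℂ] H := 1 - P with hQdef
  have hQsa : IsSelfAdjoint Q := by
    rw [IsSelfAdjoint, hQdef, star_sub, star_one, hP.star_eq]
  have hPQ : P * Q = 0 := by
    rw [hQdef, mul_sub, mul_one, hP2', sub_self]
  set S : H →L[ℂ] H := Q * C * Q with hSdef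
  set A : H →L[ℂ] H := P * C * P with hAdef
  set D : H →L[ℂ] H := P * C * Q with hDdef
  have hPP : ∀ X : H →L[ℂ] H, P * (P * X) = P * X := by
    intro X; rw [← mul_assoc, hP2']
  have hCC : ∀ X : H →L[ℂ] H, C * (C * X) = X := by
    intro X; rw [← mul_assoc, hC2, one_mul]
  have hPapp : ∀ v : H, P (P v) = P v := by
    intro v; rw [← mul_apply_eq_comp, hP2']
  have hCapp : ∀ v : H, C (C v) = v := by
    intro v; rw [← mul_apply_eq_comp, hC2, one_apply_eq_self]
  -- self-adjointness of A and S
  have hAsa : IsSelfAdjoint A := by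
    rw [IsSelfAdjoint, hAdef]
    simp only [star_mul, hP.star_eq, hCsa.star_eq]
    noncomm_ring
  have hSsa : IsSelfAdjoint S := by
    rw [IsSelfAdjoint, hSdef]
    simp only [star_mul, hQsa.star_eq, hCsa.star_eq]
    noncomm_ring
  have hsym : ∀ (B : H →L[ℂ] H), IsSelfAdjoint B → ∀ x y : H,
      (inner ℂ (B x) y : ℂ) = inner ℂ x (B y) := by
    intro B hB x y
    have := hB.isSymmetric x y
    simpa using this
  -- isometry of C
  have hCiso : ∀ v : H, ‖C v‖ = ‖v‖ := by
    intro v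
    have h1 : (inner ℂ (C v) (C v) : ℂ) = inner ℂ v v := by
      rw [hsym C hCsa v (C v), hCapp]
    have h2 : ‖C v‖ ^ 2 = ‖v‖ ^ 2 := by
      rw [← inner_self_eq_norm_sq (𝕜 := ℂ), ← inner_self_eq_norm_sq (𝕜 := ℂ), h1]
    calc ‖C v‖ = Real.sqrt (‖C v‖ ^ 2) := (Real.sqrt_sq (norm_nonneg _)).symm
      _ = Real.sqrt (‖v‖ ^ 2) := by rw [h2]
      _ = ‖v‖ := Real.sqrt_sq (norm_nonneg _)
  -- norm bound for P
  have hPn : ∀ v : H, ‖P v‖ ≤ ‖v‖ := by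
    intro v
    have h1 : (inner ℂ (P v) (P v) : ℂ) = inner ℂ v (P v) := by
      rw [hsym P hP v (P v), hPapp]
    have h2 : ‖P v‖ ^ 2 ≤ ‖v‖ * ‖P v‖ := by
      rw [← inner_self_eq_norm_sq (𝕜 := ℂ), h1]
      calc RCLike.re (inner ℂ v (P v) : ℂ) ≤ ‖(inner ℂ v (P v) : ℂ)‖ := RCLike.re_le_norm _
        _ ≤ ‖v‖ * ‖P v‖ := norm_inner_le_norm _ _
    nlinarith [norm_nonneg (P v), norm_nonneg v]
  have hAn : ∀ v : H, ‖A v‖ ≤ ‖v‖ := by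
    intro v
    have : A v = P (C (P v)) := by rw [hAdef]; simp [mul_apply_eq_comp]
    rw [this]
    calc ‖P (C (P v))‖ ≤ ‖C (P v)‖ := hPn _
      _ = ‖P v‖ := hCiso _
      _ ≤ ‖v‖ := hPn _
  -- Pythagoras
  have hpyth : ∀ w : H, ‖w‖ ^ 2 = ‖P w‖ ^ 2 + ‖Q w‖ ^ 2 := by
    intro w
    have horth : (inner ℂ (P w) (Q w) : ℂ) = 0 := by
      rw [hsym P hP w (Q w), ← mul_apply_eq_comp, hPQ, zero_apply, inner_zero_right]
    have hsum : P w + Q w = w := by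
      rw [hQdef]; simp [sub_apply, one_apply_eq_self]
    calc ‖w‖ ^ 2 = ‖P w + Q w‖ ^ 2 := by rw [hsum]
      _ = ‖P w‖ ^ 2 + 2 * RCLike.re (inner ℂ (P w) (Q w) : ℂ) + ‖Q w‖ ^ 2 :=
          norm_add_sq (𝕜 := ℂ) _ _
      _ = ‖P w‖ ^ 2 + ‖Q w‖ ^ 2 := by rw [horth]; simp
  -- relating P(R u) and P(C u)
  have hPR : ∀ u : H, P (R u) = ε • P (C u) := by
    intro u
    have : C u = ε • R u := by rw [hCdef]; simp
    rw [this, map_smul, smul_smul, hε2, one_smul]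
  have hQu : ∀ u : H, P u = 0 → Q u = u := by
    intro u hu; rw [hQdef]; simp [sub_apply, one_apply_eq_self, hu]
  have hSapp : ∀ u : H, S u = Q (C (Q u)) := by
    intro u; rw [hSdef]; simp [mul_apply_eq_comp]
  -- T = P * C
  have hT : ε • (P ∘L R) = P * C := by
    have : P * C = P ∘L (ε • R) := by rw [hCdef]; rfl
    rw [this, ContinuousLinearMap.comp_smul]
  -- powers on range of P
  have hpow : ∀ (j : ℕ) (v : H), P v = v → ((P * C) ^ j) v = (A ^ j) v := by
    intro j
    induction j with
    | zero => intro v _; simp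
    | succ n ih =>
      intro v hv
      have e1 : ((P * C) ^ (n+1)) v = ((P * C) ^ n) ((P * C) v) := by
        rw [pow_succ]; rfl
      have e2 : (A ^ (n+1)) v = (A ^ n) (A v) := by
        rw [pow_succ]; rfl
      have h1 : (P * C) v = A v := by
        rw [hAdef, mul_apply_eq_comp, mul_apply_eq_comp, mul_apply_eq_comp, hv]
      rw [e1, e2, h1]
      exact ih (A v) (by rw [hAdef]; simp [mul_apply_eq_comp, hPapp])
  -- the candidate submodule
  set Gset : Set H := {r₀ : H | P r₀ = 0 ∧
        ∃ K : H,
          Tendsto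
            (fun l : ℕ => ∑ j ∈ Finset.range (l + 1), ((ε • (P ∘L R)) ^ j) (P (R r₀)))
            atTop (nhds K)} with hGset
  have hadd : ∀ a b : H, a ∈ Gset → b ∈ Gset → a + b ∈ Gset := by
    rintro a b ⟨ha0, Ka, hKa⟩ ⟨hb0, Kb, hKb⟩
    refine ⟨by simp [map_add, ha0, hb0], Ka + Kb, ?_⟩
    have heq : (fun l : ℕ => ∑ j ∈ Finset.range (l + 1),
          ((ε • (P ∘L R)) ^ j) (P (R (a + b))))
        = fun l : ℕ => (∑ j ∈ Finset.range (l + 1), ((ε • (P ∘L R)) ^ j) (P (R a)))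
          + ∑ j ∈ Finset.range (l + 1), ((ε • (P ∘L R)) ^ j) (P (R b)) := by
      funext l
      rw [← Finset.sum_add_distrib]
      congr 1; funext j
      simp [map_add]
    rw [heq]
    exact hKa.add hKb
  have hsmul : ∀ (c : ℂ) (a : H), a ∈ Gset → c • a ∈ Gset := by
    rintro c a ⟨ha0, Ka, hKa⟩
    refine ⟨by simp [map_smul, ha0], c • Ka, ?_⟩
    have heq : (fun l : ℕ => ∑ j ∈ Finset.range (l + 1),
          ((ε • (P ∘L R)) ^ j) (P (R (c • a))))
        = fun l : ℕ => c • ∑ j ∈ Finset.range (l + 1), ((ε • (P ∘L R)) ^ j) (P (R a)) := by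
      funext l
      rw [Finset.smul_sum]
      congr 1; funext j
      simp [map_smul]
    rw [heq]
    exact hKa.const_smul c
  have hzero : (0 : H) ∈ Gset := by
    refine ⟨by simp, 0, ?_⟩
    have heq : (fun l : ℕ => ∑ j ∈ Finset.range (l + 1),
          ((ε • (P ∘L R)) ^ j) (P (R (0 : H)))) = fun _ : ℕ => (0 : H) := by
      funext l; simp only [map_zero, Finset.sum_const_zero]
    rw [heq]
    exact tendsto_const_nhds
  set Gsub : Submodule ℂ H :=
    { carrier := Gset
      add_mem' := fun {a b} ha hb => hadd a b ha hb
      zero_mem' := hzero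
      smul_mem' := fun c a ha => hsmul c a ha } with hGsub
  -- membership criterion: P u = 0 and P (C u) = 0
  have hmem0 : ∀ u : H, P u = 0 → P (C u) = 0 → u ∈ Gset := by
    intro u hu0 hCu
    have hx : P (R u) = 0 := by rw [hPR, hCu, smul_zero]
    refine ⟨hu0, 0, ?_⟩
    have heq : (fun l : ℕ => ∑ j ∈ Finset.range (l + 1),
          ((ε • (P ∘L R)) ^ j) (P (R u))) = fun _ : ℕ => (0 : H) := by
      funext l; rw [hx]; simp only [map_zero, Finset.sum_const_zero]
    rw [heq]
    exact tendsto_const_nhds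
  -- membership for S u = 0 (with P u = 0)
  have hmemK : ∀ u : H, P u = 0 → S u = 0 → u ∈ Gset := by
    intro u hu0 hSu
    set x : H := P (R u) with hxdef
    have hx : x = ε • P (C u) := hPR u
    have hQCu : Q (C u) = 0 := by
      have := hSapp u
      rw [hQu u hu0] at this
      rw [← this, hSu]
    have hPCu : P (C u) = C u := by
      have : P (C u) + Q (C u) = C u := by
        rw [hQdef]; simp [sub_apply, one_apply_eq_self]
      rw [hQCu, add_zero] at this
      exact this
    have hTx : (P * C) x = 0 := by
      rw [hx, map_smul, mul_apply_eq_comp, hPCu, hCapp, hu0, smul_zero]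
    have hTjx : ∀ j : ℕ, ((ε • (P ∘L R)) ^ (j + 1)) x = 0 := by
      intro j
      rw [hT, pow_succ, mul_apply_eq_comp, hTx, map_zero]
    refine ⟨hu0, x, ?_⟩
    have heq : (fun l : ℕ => ∑ j ∈ Finset.range (l + 1),
          ((ε • (P ∘L R)) ^ j) (P (R u))) = fun _ : ℕ => x := by
      funext l
      rw [← hxdef, Finset.sum_range_succ' (fun j => ((ε • (P ∘L R)) ^ j) x) l]
      have : ∑ k ∈ Finset.range l, ((ε • (P ∘L R)) ^ (k + 1)) x = 0 :=
        Finset.sum_eq_zero fun k _ => hTjx k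
      rw [this, zero_add, pow_zero, one_apply_eq_self]
    rw [heq]
    exact tendsto_const_nhds
  -- the operator N
  set G₁ : H →L[ℂ] H := (1 - S) * ((1 + S) * (1 + S)) with hG₁
  set N : H →L[ℂ] H := S * G₁ with hN
  have hPS : P * S = 0 := by
    rw [hSdef, ← mul_assoc, ← mul_assoc, hPQ, zero_mul, zero_mul]
  have hPN : P * N = 0 := by
    rw [hN, ← mul_assoc, hPS, zero_mul]
  have hPSapp : ∀ v : H, P (S v) = 0 := by
    intro v; rw [← mul_apply_eq_comp, hPS, zero_apply]
  have hNsa : IsSelfAdjoint N := by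
    rw [IsSelfAdjoint, hN, hG₁]
    simp only [star_mul, star_sub, star_add, star_one, hSsa.star_eq]
    noncomm_ring
  -- commutation D S^k = (-A)^k D
  have hDS : D * S = -(A * D) := by
    simp only [hSdef, hDdef, hAdef, hQdef, mul_sub, sub_mul, mul_one, one_mul, mul_assoc,
      hPP, hCC, hP2', hC2]
    noncomm_ring
  have hDSk : ∀ k : ℕ, D * S ^ k = (-A) ^ k * D := by
    intro k
    induction k with
    | zero => simp
    | succ n ih =>
      rw [pow_succ, pow_succ, ← mul_assoc, ih, mul_assoc, hDS]
      noncomm_ring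
  -- range of N is in Gset
  have hrange : ∀ w : H, N w ∈ Gset := by
    intro w
    have hPNw : P (N w) = 0 := by rw [← mul_apply_eq_comp, hPN, zero_apply]
    -- N as polynomial in S
    have hNpoly : N = S + S ^ 2 - S ^ 3 - S ^ 4 := by
      rw [hN, hG₁]; noncomm_ring
    have hDN : D * N = (1 - A) * ((1 - A * A) * (-(A * D))) := by
      rw [hNpoly, mul_sub, mul_sub, mul_add, hDS, hDSk 2, hDSk 3, hDSk 4]
      noncomm_ring
    have hQQ : Q * Q = Q := by
      rw [hQdef]; simp only [sub_mul, mul_sub, one_mul, mul_one, hP2']; noncomm_ring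
    have hQS : Q * S = S := by
      rw [hSdef, ← mul_assoc, ← mul_assoc, hQQ]
    have hQN : Q * N = N := by
      rw [hN, ← mul_assoc, hQS]
    have hPCN : (P * C) * N = D * N := by
      rw [hDdef, mul_assoc (P * C) Q N, hQN]
    set z : H := ε • ((-(A * D)) w) with hz
    set y : H := (1 - A * A) z with hy
    have hx : P (R (N w)) = (1 - A) y := by
      rw [hPR]
      have h1 : P (C (N w)) = ((P * C) * N) w := by simp [mul_apply_eq_comp]
      rw [h1, hPCN, hDN]
      rw [hy, hz]
      simp only [mul_apply_eq_comp, map_smul]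
    have hPx : P (P (R (N w))) = P (R (N w)) := by
      rw [hPR, map_smul, hPapp]
    refine ⟨hPNw, y, ?_⟩
    have heq : (fun l : ℕ => ∑ j ∈ Finset.range (l + 1),
          ((ε • (P ∘L R)) ^ j) (P (R (N w))))
        = fun l : ℕ => y - (A ^ (l + 1)) y := by
      funext l
      have hterm : ∀ j : ℕ, ((ε • (P ∘L R)) ^ j) (P (R (N w)))
          = (A ^ j) ((1 - A) y) := by
        intro j
        rw [hT, hpow j _ hPx, hx]
      simp_rw [hterm]
      exact geom_partial A y l
    rw [heq]
    have hAy : ∀ l : ℕ, (A ^ (l + 1)) y = (A ^ (l + 1)) z - (A ^ (l + 3)) z := by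
      intro l
      have e1 : (1 - A * A) z = z - (A * A) z := by simp [sub_apply, one_apply_eq_self]
      have e2 : (A ^ (l+3)) z = (A ^ (l+1)) ((A ^ 2) z) := by
        rw [show l + 3 = l + 1 + 2 by omega, pow_add, mul_apply_eq_comp]
      have e3 : (A ^ 2) z = (A * A) z := by rw [pow_two]
      rw [hy, e1, map_sub, e2, e3]
    have htend0 : Tendsto (fun l : ℕ => (A ^ (l + 1)) z - (A ^ (l + 3)) z)
        atTop (nhds 0) :=
      (sa_contraction_pow_diff A hAsa hAn z).comp (tendsto_add_atTop_nat 1)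
    have : Tendsto (fun l : ℕ => y - (A ^ (l + 1)) y) atTop (nhds (y - 0)) := by
      apply Tendsto.sub tendsto_const_nhds
      simp_rw [hAy]
      exact htend0
    rw [sub_zero] at this
    exact this
  -- orthogonal decomposition
  set V : Submodule ℂ H := (LinearMap.range (N : H →ₗ[ℂ] H)).topologicalClosure with hV
  haveI : CompleteSpace V := by
    exact (Submodule.isClosed_topologicalClosure _).completeSpace_coe
  obtain ⟨h₁, hh₁V, h₂, hh₂, hdecomp⟩ := Submodule.exists_add_mem_mem_orthogonal (K := V) h
  have hrangeN_le_kerP : LinearMap.range (N : H →ₗ[ℂ] H) ≤ LinearMap.ker (P : H →ₗ[ℂ] H) := by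
    rintro _ ⟨w, rfl⟩
    simp only [LinearMap.mem_ker, ContinuousLinearMap.coe_coe]
    rw [← mul_apply_eq_comp, hPN, zero_apply]
  have hVle : V ≤ LinearMap.ker (P : H →ₗ[ℂ] H) :=
    Submodule.topologicalClosure_minimal _ hrangeN_le_kerP (isClosed_ker P)
  have hPh₁ : P h₁ = 0 := hVle hh₁V
  have hPh₂ : P h₂ = 0 := by
    have := congrArg (fun v => P v) hdecomp
    simp only [map_add, hh, hPh₁, zero_add] at this
    exact this.symm
  have hNh₂ : N h₂ = 0 := by
    have hm : N (N h₂) ∈ V :=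
      Submodule.le_topologicalClosure _ (LinearMap.mem_range_self _ _)
    have h0 : (inner ℂ (N (N h₂)) h₂ : ℂ) = 0 :=
      (Submodule.mem_orthogonal V h₂).mp hh₂ _ hm
    rw [hsym N hNsa (N h₂) h₂] at h0
    exact inner_self_eq_zero.mp h0
  -- decomposition of h₂ into eigenvectors
  set M₃ : H →L[ℂ] H := (3 • (S * S) + 5 • S) * (1 - S) with hM₃
  have hpf : (4 : ℕ) • (1 : H →L[ℂ] H)
      = 4 • G₁ + S * ((1 + S) * (1 + S)) + -M₃ := by
    rw [hG₁, hM₃]; noncomm_ring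
  set w₁ : H := (4 : ℕ) • (G₁ h₂) with hw₁
  set w₂ : H := (S * ((1 + S) * (1 + S))) h₂ with hw₂
  set w₃ : H := -(M₃ h₂) with hw₃
  have h4h₂ : (4 : ℕ) • h₂ = w₁ + w₂ + w₃ := by
    have happ := congrArg (fun T : H →L[ℂ] H => T h₂) hpf
    simp only [smul_apply, one_apply_eq_self, add_apply, neg_apply] at happ
    rw [hw₁, hw₂, hw₃]
    exact happ
  have hSw₁ : S w₁ = 0 := by
    rw [hw₁, map_nsmul]
    have : S (G₁ h₂) = N h₂ := by rw [← mul_apply_eq_comp, ← hN]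
    rw [this, hNh₂, smul_zero]
  have hPw₂ : P w₂ = 0 := by
    rw [hw₂, mul_apply_eq_comp]
    exact hPSapp _
  have hSw₂ : S w₂ = w₂ := by
    have h2 : (1 - S) * (S * ((1 + S) * (1 + S))) = N := by
      rw [hN, hG₁]; noncomm_ring
    have := congrArg (fun T : H →L[ℂ] H => T h₂) h2
    simp only [mul_apply_eq_comp, sub_apply, one_apply_eq_self] at this
    rw [hNh₂] at this
    have h2' : (1 - S) w₂ = 0 := by
      rw [sub_apply, one_apply_eq_self, hw₂, mul_apply_eq_comp]
      simpa [mul_apply_eq_comp] using this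
    rw [sub_apply, one_apply_eq_self] at h2'
    linear_combination (norm := abel) -h2'
  have hBw₃ : (1 + S) w₃ = 0 := by
    have h3 : (1 + S) * ((1 + S) * (-M₃)) = -((3 • S + 5 • 1) * N) := by
      rw [hN, hG₁, hM₃]; noncomm_ring
    have h3' := congrArg (fun T : H →L[ℂ] H => T h₂) h3
    simp only [mul_apply_eq_comp, neg_apply] at h3'
    rw [hNh₂, map_zero, neg_zero] at h3'
    have hBsa : IsSelfAdjoint (1 + S : H →L[ℂ] H) := by
      rw [IsSelfAdjoint, star_add, star_one, hSsa.star_eq]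
    have h0 : (inner ℂ ((1 + S) ((1 + S) w₃)) w₃ : ℂ) = 0 := by
      have he : (1 + S) ((1 + S) w₃) = 0 := by
        rw [hw₃]
        exact h3'
      rw [he, inner_zero_left]
    rw [hsym (1 + S) hBsa ((1 + S) w₃) w₃] at h0
    exact inner_self_eq_zero.mp h0
  have hSw₃ : S w₃ = -w₃ := by
    rw [add_apply, one_apply_eq_self] at hBw₃
    linear_combination (norm := abel) hBw₃
  have hPw₃ : P w₃ = 0 := by
    have : w₃ = -(S w₃) := by rw [hSw₃, neg_neg]
    rw [this, map_neg, hPSapp, neg_zero]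
  have hPw₁ : P w₁ = 0 := by
    have : w₁ = (4 : ℕ) • h₂ - w₂ - w₃ := by
      rw [h4h₂]; abel
    rw [this, map_sub, map_sub, map_nsmul, hPh₂, hPw₂, hPw₃, smul_zero, sub_zero, sub_zero]
  -- norm criterion for P (C u) = 0
  have hPCzero : ∀ u : H, ‖Q (C u)‖ = ‖u‖ → P (C u) = 0 := by
    intro u hnorm
    have hp := hpyth (C u)
    rw [hCiso, hnorm] at hp
    have h1 : ‖P (C u)‖ ^ 2 = 0 := by linarith
    have h2 : ‖P (C u)‖ = 0 := by nlinarith [norm_nonneg (P (C u))]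
    exact norm_eq_zero.mp h2
  have hw₁G : w₁ ∈ Gset := hmemK w₁ hPw₁ hSw₁
  have hw₂G : w₂ ∈ Gset := by
    refine hmem0 w₂ hPw₂ (hPCzero w₂ ?_)
    have : Q (C w₂) = w₂ := by
      have := hSapp w₂
      rw [hQu w₂ hPw₂] at this
      rw [← this, hSw₂]
    rw [this]
  have hw₃G : w₃ ∈ Gset := by
    refine hmem0 w₃ hPw₃ (hPCzero w₃ ?_)
    have : Q (C w₃) = -w₃ := by
      have := hSapp w₃
      rw [hQu w₃ hPw₃] at this
      rw [← this, hSw₃]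
    rw [this, norm_neg]
  -- assembling
  have hGclosure : closure Gset = (Gsub.topologicalClosure : Set H) := by
    rw [Submodule.topologicalClosure_coe]
    rfl
  show h ∈ closure Gset
  rw [hGclosure]
  have hVleG : V ≤ Gsub.topologicalClosure := by
    have h1 : LinearMap.range (N : H →ₗ[ℂ] H) ≤ Gsub := by
      rintro _ ⟨w, rfl⟩
      exact hrange w
    exact Submodule.topologicalClosure_mono h1
  have hh₁G : h₁ ∈ Gsub.topologicalClosure := hVleG hh₁V
  have hle : Gsub ≤ Gsub.topologicalClosure := Submodule.le_topologicalClosure _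
  have hh₂G : h₂ ∈ Gsub.topologicalClosure := by
    have hq : h₂ = (1/4 : ℂ) • ((4 : ℕ) • h₂) := by
      rw [← Nat.cast_smul_eq_nsmul ℂ, smul_smul]
      norm_num
    rw [hq, h4h₂]
    exact Submodule.smul_mem _ _
      (Submodule.add_mem _ (Submodule.add_mem _ (hle hw₁G) (hle hw₂G)) (hle hw₃G))
  rw [hdecomp]
  exact Submodule.add_mem _ hh₁G hh₂G
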